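/- Let T, S be two distinct standard tableaux of a common two-row shape. Then there exist 0 ≤ i < j ≤ n such that Y^T_{j/i} strictly precedes Y^S_{j/i} in dominance order or Y^S_{j/i} strictly precedes Y^T_{j/i}; more precisely, if Y^S_{j/i} ⪯ Y^T_{j/i} for all pairs i < j, then T = S. -/

import Mathlib

open scoped Classical

/-- A standard tableau of shape `Y`: a bijective filling of the cells by `1,…,n` whose
rows increase to the right and whose columns increase to the bottom. -/
def IsStandardTableau (Y : YoungDiagram) (f : ℕ × ℕ → ℕ) : Prop :=
  Set.BijOn f ↑Y.cells (Set.Icc 1 Y.card) ∧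
    (∀ i j₁ j₂ : ℕ, (i, j₁) ∈ Y → (i, j₂) ∈ Y → j₁ < j₂ → f (i, j₁) < f (i, j₂)) ∧
    (∀ i₁ i₂ j : ℕ, (i₁, j) ∈ Y → (i₂, j) ∈ Y → i₁ < i₂ → f (i₁, j) < f (i₂, j))

/-- `c` comes strictly before `c'` in the (bottom-to-top, left-to-right) reading order. -/
def ReadLT (c c' : ℕ × ℕ) : Prop := c'.1 < c.1 ∨ (c.1 = c'.1 ∧ c.2 < c'.2)

/-- Greene invariant of the entries in `(i, j]` of the reading word of `(Y, f)`:
the maximal total size of `k` pairwise disjoint increasing subsequences. -/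
noncomputable def greene (Y : YoungDiagram) (f : ℕ × ℕ → ℕ) (i j k : ℕ) : ℕ :=
  sSup {m : ℕ | ∃ C : Fin k → Finset (ℕ × ℕ),
    (∀ l, C l ⊆ Y.cells) ∧
    (∀ l l', l ≠ l' → Disjoint (C l) (C l')) ∧
    (∀ l, ∀ c ∈ C l, i < f c ∧ f c ≤ j) ∧
    (∀ l, ∀ c ∈ C l, ∀ c' ∈ C l, c ≠ c' →
      (ReadLT c c' ∧ f c < f c') ∨ (ReadLT c' c ∧ f c' < f c)) ∧
    m = ∑ l, (C l).card}

/-- By Greene's theorem, `Z` is the rectified shape `Y^f_{j/i}` of the skew subtableau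
of `(Y, f)` with entries `i+1,…,j` iff its partial row sums equal the Greene
invariants. -/
def IsRectifiedShape (Y : YoungDiagram) (f : ℕ × ℕ → ℕ) (i j : ℕ) (Z : YoungDiagram) :
    Prop :=
  ∀ k : ℕ, ∑ l ∈ Finset.range k, Z.rowLen l = greene Y f i j k

namespace Stmt19Aux

open Finset

variable {Y : YoungDiagram} {h : ℕ × ℕ → ℕ}

/-- number of cells in row `r` with value `≤ m` -/
noncomputable def cnt (Y : YoungDiagram) (h : ℕ × ℕ → ℕ) (r m : ℕ) : ℕ :=
  (Y.cells.filter fun c => c.1 = r ∧ h c ≤ m).card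

/-- number of cells in row `r` with value in `(i, j]` -/
noncomputable def wcnt (Y : YoungDiagram) (h : ℕ × ℕ → ℕ) (r i j : ℕ) : ℕ :=
  (Y.cells.filter fun c => c.1 = r ∧ i < h c ∧ h c ≤ j).card

/-- total number of cells with value in `(i, j]` -/
noncomputable def wtotal (Y : YoungDiagram) (h : ℕ × ℕ → ℕ) (i j : ℕ) : ℕ :=
  (Y.cells.filter fun c => i < h c ∧ h c ≤ j).card

lemma val_mem (hst : IsStandardTableau Y h) {c : ℕ × ℕ} (hc : c ∈ Y.cells) :
    1 ≤ h c ∧ h c ≤ Y.card := hst.1.mapsTo hc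

lemma val_inj (hst : IsStandardTableau Y h) {c c' : ℕ × ℕ} (hc : c ∈ Y.cells)
    (hc' : c' ∈ Y.cells) (hv : h c = h c') : c = c' := hst.1.injOn hc hc' hv

lemma row_lt (hst : IsStandardTableau Y h) {c c' : ℕ × ℕ} (hc : c ∈ Y.cells)
    (hc' : c' ∈ Y.cells) (hr : c.1 = c'.1) (hcol : c.2 < c'.2) : h c < h c' := by
  obtain ⟨a, b⟩ := c; obtain ⟨a', b'⟩ := c'
  simp only at hr hcol; subst hr
  exact hst.2.1 a b b' (by simpa using hc) (by simpa using hc') hcol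

lemma col_lt (hst : IsStandardTableau Y h) {c c' : ℕ × ℕ} (hc : c ∈ Y.cells)
    (hc' : c' ∈ Y.cells) (hcol : c.2 = c'.2) (hr : c.1 < c'.1) : h c < h c' := by
  obtain ⟨a, b⟩ := c; obtain ⟨a', b'⟩ := c'
  simp only at hr hcol; subst hcol
  exact hst.2.2 a a' b (by simpa using hc) (by simpa using hc') hr

lemma cnt_zero (hst : IsStandardTableau Y h) (r : ℕ) : cnt Y h r 0 = 0 := by
  rw [cnt, Finset.card_eq_zero, Finset.filter_eq_empty_iff]
  rintro c hc ⟨-, h0⟩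
  exact absurd h0 (by have := (val_mem hst hc).1; omega)

lemma cnt_mono (r m : ℕ) : cnt Y h r m ≤ cnt Y h r (m + 1) := by
  refine Finset.card_le_card (fun c hc => ?_)
  simp only [Finset.mem_filter] at hc ⊢
  exact ⟨hc.1, hc.2.1, by omega⟩

lemma cnt_step (hst : IsStandardTableau Y h) (r m : ℕ) :
    cnt Y h r (m + 1) ≤ cnt Y h r m + 1 := by
  have hsub : (Y.cells.filter fun c => c.1 = r ∧ h c ≤ m + 1) ⊆
      (Y.cells.filter fun c => c.1 = r ∧ h c ≤ m) ∪ (Y.cells.filter fun c => h c = m + 1) := by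
    intro c hc
    simp only [Finset.mem_filter] at hc
    obtain ⟨hcY, hr, hv⟩ := hc
    simp only [Finset.mem_union, Finset.mem_filter, hcY, hr, true_and]
    omega
  have hcard1 : (Y.cells.filter fun c => h c = m + 1).card ≤ 1 := by
    refine Finset.card_le_one.2 ?_
    intro c hc c' hc'
    simp only [Finset.mem_filter] at hc hc'
    exact val_inj hst hc.1 hc'.1 (by omega)
  calc cnt Y h r (m+1) ≤ _ := Finset.card_le_card hsub
    _ ≤ _ + _ := Finset.card_union_le _ _
    _ ≤ cnt Y h r m + 1 := by exact Nat.add_le_add_left hcard1 _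

/-- splitting a filtered count over the two rows -/
lemma card_filter_split (htr : ∀ c ∈ Y.cells, c.1 ≤ 1) (p : ℕ × ℕ → Prop) [DecidablePred p] :
    (Y.cells.filter p).card =
      (Y.cells.filter fun c => c.1 = 0 ∧ p c).card + (Y.cells.filter fun c => c.1 = 1 ∧ p c).card := by
  rw [← Finset.card_union_of_disjoint]
  · congr 1
    ext c
    simp only [Finset.mem_filter, Finset.mem_union]
    constructor
    · rintro ⟨hcY, hp⟩
      have := htr c hcY
      interval_cases hr : c.1 <;> simp_all
    · rintro (⟨hcY, -, hp⟩ | ⟨hcY, -, hp⟩) <;> exact ⟨hcY, hp⟩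
  · rw [Finset.disjoint_left]
    rintro c hc hc'
    simp only [Finset.mem_filter] at hc hc'
    omega

lemma card_window (hst : IsStandardTableau Y h) {m : ℕ} (hm : m ≤ Y.card) :
    (Y.cells.filter fun c => h c ≤ m).card = m := by
  have key : (Y.cells.filter fun c => h c ≤ m).card = (Finset.Icc 1 m).card := by
    refine Finset.card_bij (fun c _ => h c) ?_ ?_ ?_
    · intro c hc
      simp only [Finset.mem_filter] at hc
      have := (val_mem hst hc.1).1
      simp only [Finset.mem_Icc]
      exact ⟨this, hc.2⟩
    · intro c hc c' hc'
      simp only [Finset.mem_filter] at hc hc'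
      exact val_inj hst hc.1 hc'.1
    · intro v hv
      simp only [Finset.mem_Icc] at hv
      obtain ⟨c, hcY, hcv⟩ := hst.1.surjOn (Set.mem_Icc.2 ⟨hv.1, le_trans hv.2 hm⟩)
      exact ⟨c, by simp only [Finset.mem_filter]; exact ⟨by simpa using hcY, by omega⟩, hcv⟩
  rw [key]; simp

lemma cnt_total (hst : IsStandardTableau Y h) (htr : ∀ c ∈ Y.cells, c.1 ≤ 1) {m : ℕ}
    (hm : m ≤ Y.card) : cnt Y h 0 m + cnt Y h 1 m = m := by
  rw [cnt, cnt, ← card_filter_split htr (fun c => h c ≤ m), card_window hst hm]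

lemma cnt_ballot (hst : IsStandardTableau Y h) (htr : ∀ c ∈ Y.cells, c.1 ≤ 1) {m : ℕ}
    (hm : m ≤ Y.card) : m ≤ 2 * cnt Y h 0 m := by
  have h1 : cnt Y h 1 m ≤ cnt Y h 0 m := by
    refine Finset.card_le_card_of_injOn (fun c => (0, c.2)) ?_ ?_
    · intro c hc
      simp only [Finset.mem_coe, Finset.mem_filter] at hc
      obtain ⟨hcY, hr, hv⟩ := hc
      have hmem : (0, c.2) ∈ Y.cells := by
        rw [YoungDiagram.mem_cells] at hcY ⊢
        exact Y.up_left_mem (by omega) le_rfl (by simpa using hcY)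
      refine Finset.mem_filter.2 ⟨hmem, rfl, le_trans (le_of_lt ?_) hv⟩
      exact col_lt hst hmem hcY rfl (show (0:ℕ) < c.1 by omega)
    · intro c hc c' hc' hee
      simp only [Finset.mem_coe, Finset.mem_filter] at hc hc'
      have h2' := congrArg (Prod.snd : ℕ × ℕ → ℕ) hee
      have h2 : c.2 = c'.2 := h2'
      have e1 : c.1 = 1 := hc.2.1
      have e1' : c'.1 = 1 := hc'.2.1
      obtain ⟨a, b⟩ := c; obtain ⟨a', b'⟩ := c'
      exact Prod.ext (by simp only at e1 e1' ⊢; omega) h2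
  have := cnt_total hst htr hm
  omega

lemma wcnt_add_cnt {r i j : ℕ} (hij : i ≤ j) : wcnt Y h r i j + cnt Y h r i = cnt Y h r j := by
  rw [wcnt, cnt, cnt, ← Finset.card_union_of_disjoint]
  · congr 1
    ext c
    simp only [Finset.mem_filter, Finset.mem_union]
    constructor
    · rintro (⟨hcY, hr, hv⟩ | ⟨hcY, hr, hv⟩) <;> exact ⟨hcY, hr, by omega⟩
    · rintro ⟨hcY, hr, hv⟩
      rcases le_or_gt (h c) i with hle | hlt
      · exact Or.inr ⟨hcY, hr, hle⟩
      · exact Or.inl ⟨hcY, hr, hlt, hv⟩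
  · rw [Finset.disjoint_left]
    rintro c hc hc'
    simp only [Finset.mem_filter] at hc hc'
    omega

/-- the defining set of the Greene invariant -/
def GSet (Y : YoungDiagram) (h : ℕ × ℕ → ℕ) (i j k : ℕ) : Set ℕ :=
  {m : ℕ | ∃ C : Fin k → Finset (ℕ × ℕ),
    (∀ l, C l ⊆ Y.cells) ∧
    (∀ l l', l ≠ l' → Disjoint (C l) (C l')) ∧
    (∀ l, ∀ c ∈ C l, i < h c ∧ h c ≤ j) ∧
    (∀ l, ∀ c ∈ C l, ∀ c' ∈ C l, c ≠ c' →
      (ReadLT c c' ∧ h c < h c') ∨ (ReadLT c' c ∧ h c' < h c)) ∧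
    m = ∑ l, (C l).card}

lemma greene_eq (i j k : ℕ) : greene Y h i j k = sSup (GSet Y h i j k) := rfl

lemma zero_mem_GSet (i j k : ℕ) : 0 ∈ GSet Y h i j k :=
  ⟨fun _ => ∅, by simp, by simp, by simp, by simp, by simp⟩

lemma GSet_le (i j k : ℕ) : ∀ m ∈ GSet Y h i j k, m ≤ wtotal Y h i j := by
  rintro m ⟨C, hsub, hdisj, hval, -, hm⟩
  have hbi : (Finset.univ.biUnion C).card = ∑ l, (C l).card :=
    Finset.card_biUnion (fun x _ y _ hxy => hdisj x y hxy)
  rw [hm, ← hbi]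
  refine Finset.card_le_card ?_
  intro c hc
  simp only [Finset.mem_biUnion] at hc
  obtain ⟨l, -, hcl⟩ := hc
  exact Finset.mem_filter.2 ⟨hsub l hcl, hval l c hcl⟩

lemma GSet_bdd (i j k : ℕ) : BddAbove (GSet Y h i j k) := ⟨_, GSet_le i j k⟩

lemma wtotal_add (hst : IsStandardTableau Y h) {i j : ℕ} (hij : i ≤ j) (hj : j ≤ Y.card) :
    wtotal Y h i j + i = j := by
  have : wtotal Y h i j + (Y.cells.filter fun c => h c ≤ i).card
      = (Y.cells.filter fun c => h c ≤ j).card := by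
    rw [wtotal, ← Finset.card_union_of_disjoint]
    · congr 1; ext c
      simp only [Finset.mem_filter, Finset.mem_union]
      constructor
      · rintro (⟨hcY, hv⟩ | ⟨hcY, hv⟩) <;> exact ⟨hcY, by omega⟩
      · rintro ⟨hcY, hv⟩
        rcases le_or_gt (h c) i with hle | hlt
        · exact Or.inr ⟨hcY, hle⟩
        · exact Or.inl ⟨hcY, hlt, hv⟩
    · rw [Finset.disjoint_left]
      rintro c hc hc'
      simp only [Finset.mem_filter] at hc hc'
      omega
  rw [card_window hst (le_trans hij hj), card_window hst hj] at this
  exact this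

lemma greene_le_wtotal (i j k : ℕ) : greene Y h i j k ≤ wtotal Y h i j := by
  rw [greene_eq]
  exact csSup_le ⟨0, zero_mem_GSet i j k⟩ (GSet_le i j k)

lemma greene_zero (i j : ℕ) : greene Y h i j 0 = 0 := by
  rw [greene_eq]
  refine le_antisymm (csSup_le ⟨0, zero_mem_GSet i j 0⟩ ?_) (Nat.zero_le _)
  rintro m ⟨C, -, -, -, -, hm⟩
  simp at hm
  omega

lemma same_row_chain (hst : IsStandardTableau Y h) {c c' : ℕ × ℕ} (hc : c ∈ Y.cells)
    (hc' : c' ∈ Y.cells) (hr : c.1 = c'.1) (hne : c ≠ c') :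
    (ReadLT c c' ∧ h c < h c') ∨ (ReadLT c' c ∧ h c' < h c) := by
  rcases lt_trichotomy c.2 c'.2 with hlt | heq | hgt
  · exact Or.inl ⟨Or.inr ⟨hr, hlt⟩, row_lt hst hc hc' hr hlt⟩
  · exact absurd (Prod.ext hr heq) hne
  · exact Or.inr ⟨Or.inr ⟨hr.symm, hgt⟩, row_lt hst hc' hc hr.symm hgt⟩

lemma chain_mem (hst : IsStandardTableau Y h) {i t j : ℕ} (hit : i ≤ t) (htj : t ≤ j) :
    wcnt Y h 1 i t + wcnt Y h 0 t j ∈ GSet Y h i j 1 := by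
  set R1 := Y.cells.filter fun c => c.1 = 1 ∧ i < h c ∧ h c ≤ t with hR1
  set R0 := Y.cells.filter fun c => c.1 = 0 ∧ t < h c ∧ h c ≤ j with hR0
  have hmemR1 : ∀ c ∈ R1, c ∈ Y.cells ∧ c.1 = 1 ∧ i < h c ∧ h c ≤ t := by
    intro c hc; simpa [hR1, Finset.mem_filter] using hc
  have hmemR0 : ∀ c ∈ R0, c ∈ Y.cells ∧ c.1 = 0 ∧ t < h c ∧ h c ≤ j := by
    intro c hc; simpa [hR0, Finset.mem_filter] using hc
  refine ⟨fun _ => R1 ∪ R0, ?_, ?_, ?_, ?_, ?_⟩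
  · intro l c hc
    rcases Finset.mem_union.1 hc with hc | hc
    · exact (hmemR1 c hc).1
    · exact (hmemR0 c hc).1
  · intro l l' hll'
    exact absurd (Subsingleton.elim l l') hll'
  · intro l c hc
    rcases Finset.mem_union.1 hc with hc | hc
    · have := hmemR1 c hc; omega
    · have := hmemR0 c hc; omega
  · intro l c hc c' hc' hne
    rcases Finset.mem_union.1 hc with hc1 | hc0 <;> rcases Finset.mem_union.1 hc' with hc1' | hc0'
    · exact same_row_chain hst (hmemR1 c hc1).1 (hmemR1 c' hc1').1
        (by have := (hmemR1 c hc1).2.1; have := (hmemR1 c' hc1').2.1; omega) hne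
    · refine Or.inl ⟨Or.inl ?_, ?_⟩
      · have := (hmemR1 c hc1).2.1; have := (hmemR0 c' hc0').2.1; omega
      · have := (hmemR1 c hc1).2.2; have := (hmemR0 c' hc0').2.2; omega
    · refine Or.inr ⟨Or.inl ?_, ?_⟩
      · have := (hmemR1 c' hc1').2.1; have := (hmemR0 c hc0).2.1; omega
      · have := (hmemR1 c' hc1').2.2; have := (hmemR0 c hc0).2.2; omega
    · exact same_row_chain hst (hmemR0 c hc0).1 (hmemR0 c' hc0').1
        (by have := (hmemR0 c hc0).2.1; have := (hmemR0 c' hc0').2.1; omega) hne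
  · rw [Fin.sum_univ_one, Finset.card_union_of_disjoint, wcnt, wcnt]
    rw [Finset.disjoint_left]
    intro c hc hc'
    have := (hmemR1 c hc).2.1; have := (hmemR0 c hc').2.1
    omega

lemma greene_lower (hst : IsStandardTableau Y h) {i t j : ℕ} (hit : i ≤ t) (htj : t ≤ j) :
    wcnt Y h 1 i t + wcnt Y h 0 t j ≤ greene Y h i j 1 := by
  rw [greene_eq]
  exact le_csSup (GSet_bdd i j 1) (chain_mem hst hit htj)

lemma greene_upper (hst : IsStandardTableau Y h) (htr : ∀ c ∈ Y.cells, c.1 ≤ 1) {i j : ℕ}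
    (hij : i ≤ j) :
    ∃ s, i ≤ s ∧ s ≤ j ∧ greene Y h i j 1 ≤ wcnt Y h 1 i s + wcnt Y h 0 s j := by
  have hmem : greene Y h i j 1 ∈ GSet Y h i j 1 := by
    rw [greene_eq]
    exact Nat.sSup_mem ⟨0, zero_mem_GSet i j 1⟩ (GSet_bdd i j 1)
  obtain ⟨C, hsub, -, hval, hchain, hm⟩ := hmem
  set D := C 0 with hD
  have hDsub : D ⊆ Y.cells := hsub 0
  have hDval : ∀ c ∈ D, i < h c ∧ h c ≤ j := hval 0
  have hDchain := hchain 0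
  have hmD : greene Y h i j 1 = D.card := by rw [hm, Fin.sum_univ_one]
  set D1 := D.filter (fun c => c.1 = 1) with hD1
  set D0 := D.filter (fun c => c.1 = 0) with hD0
  have hsplit : D.card = D1.card + D0.card := by
    rw [hD1, hD0, ← Finset.card_union_of_disjoint]
    · congr 1
      ext c
      simp only [Finset.mem_filter, Finset.mem_union]
      constructor
      · intro hc
        have := htr c (hDsub hc)
        interval_cases hr : c.1 <;> simp_all
      · rintro (⟨hc, -⟩ | ⟨hc, -⟩) <;> exact hc
    · rw [Finset.disjoint_left]; rintro c hc hc'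
      simp only [Finset.mem_filter] at hc hc'; omega
  by_cases hD0ne : D0.Nonempty
  · obtain ⟨c₀, hc₀, hmin⟩ := Finset.exists_min_image D0 h hD0ne
    have hc₀D : c₀ ∈ D := (Finset.mem_filter.1 hc₀).1
    have hc₀r : c₀.1 = 0 := (Finset.mem_filter.1 hc₀).2
    have hc₀v := hDval c₀ hc₀D
    refine ⟨h c₀ - 1, by omega, by omega, ?_⟩
    have hsub1 : D1 ⊆ Y.cells.filter fun c => c.1 = 1 ∧ i < h c ∧ h c ≤ h c₀ - 1 := by
      intro c hc
      have hcD : c ∈ D := (Finset.mem_filter.1 hc).1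
      have hcr : c.1 = 1 := (Finset.mem_filter.1 hc).2
      have hcv := hDval c hcD
      have hne : c ≠ c₀ := fun e => by rw [e] at hcr; omega
      have hlt : h c < h c₀ := by
        rcases hDchain c hcD c₀ hc₀D hne with ⟨-, hlt⟩ | ⟨hrd, -⟩
        · exact hlt
        · rcases hrd with hlt' | ⟨heq, -⟩ <;> omega
      exact Finset.mem_filter.2 ⟨hDsub hcD, hcr, by omega⟩
    have hsub0 : D0 ⊆ Y.cells.filter fun c => c.1 = 0 ∧ h c₀ - 1 < h c ∧ h c ≤ j := by
      intro c hc
      have hcD : c ∈ D := (Finset.mem_filter.1 hc).1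
      have hcr : c.1 = 0 := (Finset.mem_filter.1 hc).2
      have hcv := hDval c hcD
      have hge : h c₀ ≤ h c := hmin c hc
      exact Finset.mem_filter.2 ⟨hDsub hcD, hcr, by omega⟩
    rw [hmD, hsplit, wcnt, wcnt]
    exact Nat.add_le_add (Finset.card_le_card hsub1) (Finset.card_le_card hsub0)
  · refine ⟨j, hij, le_rfl, ?_⟩
    have h0 : D0.card = 0 := by
      rw [Finset.card_eq_zero]
      exact Finset.not_nonempty_iff_eq_empty.1 hD0ne
    have hsub1 : D1 ⊆ Y.cells.filter fun c => c.1 = 1 ∧ i < h c ∧ h c ≤ j := by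
      intro c hc
      have hcD : c ∈ D := (Finset.mem_filter.1 hc).1
      have hcr : c.1 = 1 := (Finset.mem_filter.1 hc).2
      have hcv := hDval c hcD
      exact Finset.mem_filter.2 ⟨hDsub hcD, hcr, by omega⟩
    rw [hmD, hsplit, h0, Nat.add_zero, wcnt]
    exact le_trans (Finset.card_le_card hsub1) (Nat.le_add_right _ _)

lemma greene_two (hst : IsStandardTableau Y h) (htr : ∀ c ∈ Y.cells, c.1 ≤ 1) {i j k : ℕ}
    (hk : 2 ≤ k) : wtotal Y h i j ≤ greene Y h i j k := by
  set W0 := Y.cells.filter (fun c => c.1 = 0 ∧ i < h c ∧ h c ≤ j) with hW0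
  set W1 := Y.cells.filter (fun c => c.1 = 1 ∧ i < h c ∧ h c ≤ j) with hW1
  have hmemW0 : ∀ c ∈ W0, c ∈ Y.cells ∧ c.1 = 0 ∧ i < h c ∧ h c ≤ j := by
    intro c hc; simpa [hW0, Finset.mem_filter] using hc
  have hmemW1 : ∀ c ∈ W1, c ∈ Y.cells ∧ c.1 = 1 ∧ i < h c ∧ h c ≤ j := by
    intro c hc; simpa [hW1, Finset.mem_filter] using hc
  set l0 : Fin k := ⟨0, by omega⟩ with hl0
  set l1 : Fin k := ⟨1, by omega⟩ with hl1
  have hne01 : l0 ≠ l1 := by simp [hl0, hl1, Fin.ext_iff]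
  have hmemS : wtotal Y h i j ∈ GSet Y h i j k := by
    have hrow : ∀ (l : Fin k) (c : ℕ × ℕ), c ∈ (if l = l0 then W0 else if l = l1 then W1 else ∅) →
        (l = l0 ∧ c.1 = 0) ∨ (l = l1 ∧ c.1 = 1) := by
      intro l c hc
      split_ifs at hc with h1 h2
      · exact Or.inl ⟨h1, (hmemW0 c hc).2.1⟩
      · exact Or.inr ⟨h2, (hmemW1 c hc).2.1⟩
      · simp at hc
    refine ⟨fun l => if l = l0 then W0 else if l = l1 then W1 else ∅, ?_, ?_, ?_, ?_, ?_⟩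
      <;> dsimp only
    · intro l c hc
      split_ifs at hc with h1 h2
      · exact (hmemW0 c hc).1
      · exact (hmemW1 c hc).1
      · simp at hc
    · intro l l' hll'
      rw [Finset.disjoint_left]
      intro c hc hc'
      rcases hrow l c hc with ⟨e, r⟩ | ⟨e, r⟩ <;> rcases hrow l' c hc' with ⟨e', r'⟩ | ⟨e', r'⟩
      · exact hll' (e.trans e'.symm)
      · omega
      · omega
      · exact hll' (e.trans e'.symm)
    · intro l c hc
      split_ifs at hc with h1 h2
      · exact (hmemW0 c hc).2.2
      · exact (hmemW1 c hc).2.2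
      · simp at hc
    · intro l c hc c' hc' hne
      split_ifs at hc hc' with h1 h2
      · exact same_row_chain hst (hmemW0 c hc).1 (hmemW0 c' hc').1
          (by have := (hmemW0 c hc).2.1; have := (hmemW0 c' hc').2.1; omega) hne
      · exact same_row_chain hst (hmemW1 c hc).1 (hmemW1 c' hc').1
          (by have := (hmemW1 c hc).2.1; have := (hmemW1 c' hc').2.1; omega) hne
      · simp at hc
    · have hzero : ∀ l ∈ (Finset.univ : Finset (Fin k)), l ∉ ({l0, l1} : Finset (Fin k)) →
          (if l = l0 then W0 else if l = l1 then W1 else ∅).card = 0 := by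
        rintro l - hl
        simp only [Finset.mem_insert, Finset.mem_singleton] at hl
        push_neg at hl
        simp [hl.1, hl.2]
      rw [← Finset.sum_subset (Finset.subset_univ ({l0, l1} : Finset (Fin k))) hzero,
        Finset.sum_pair hne01, if_pos rfl, if_neg hne01.symm, if_pos rfl,
        wtotal, card_filter_split htr (fun c => i < h c ∧ h c ≤ j), hW0, hW1]
  rw [greene_eq]
  exact le_csSup (GSet_bdd i j k) hmemS

lemma wcnt_self (r i : ℕ) : wcnt Y h r i i = 0 := by
  rw [wcnt, Finset.card_eq_zero, Finset.filter_eq_empty_iff]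
  rintro c -
  rintro ⟨-, hv, hv'⟩
  omega

lemma exists_rect (hst : IsStandardTableau Y h) (htr : ∀ c ∈ Y.cells, c.1 ≤ 1) {i j : ℕ}
    (hij : i ≤ j) :
    ∃ Z : YoungDiagram, IsRectifiedShape Y h i j Z ∧ Z.rowLen 0 = greene Y h i j 1 := by
  set L := greene Y h i j 1 with hL
  set M := wtotal Y h i j with hM
  have hLM : L ≤ M := greene_le_wtotal i j 1
  have hw0 : wcnt Y h 0 i j ≤ L := by
    have := greene_lower hst (le_refl i) hij
    rw [wcnt_self] at this
    simpa using this
  have hw1 : wcnt Y h 1 i j ≤ L := by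
    have := greene_lower hst hij (le_refl j)
    rw [wcnt_self] at this
    simpa using this
  have hsplit : M = wcnt Y h 0 i j + wcnt Y h 1 i j := by
    rw [hM, wtotal, wcnt, wcnt, card_filter_split htr (fun c => i < h c ∧ h c ≤ j)]
  have hML : M ≤ 2 * L := by omega
  have hsorted : List.SortedGE [L, M - L] := by
    rw [List.sortedGE_iff_pairwise]
    refine List.pairwise_cons.2 ⟨?_, List.pairwise_singleton _ _⟩
    intro b hb
    simp only [List.mem_singleton] at hb
    omega
  refine ⟨YoungDiagram.ofRowLens [L, M - L] hsorted, ?_, ?_⟩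
  · have r0 : (YoungDiagram.ofRowLens [L, M - L] hsorted).rowLen 0 = L := by
      simpa using YoungDiagram.rowLen_ofRowLens (w := [L, M - L]) (hw := hsorted) ⟨0, by simp⟩
    have r1 : (YoungDiagram.ofRowLens [L, M - L] hsorted).rowLen 1 = M - L := by
      simpa using YoungDiagram.rowLen_ofRowLens (w := [L, M - L]) (hw := hsorted) ⟨1, by simp⟩
    have rhi : ∀ l, 2 ≤ l → (YoungDiagram.ofRowLens [L, M - L] hsorted).rowLen l = 0 := by
      intro l hl
      by_contra hne
      have hmem : (l, 0) ∈ YoungDiagram.ofRowLens [L, M - L] hsorted :=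
        YoungDiagram.mem_iff_lt_rowLen.2 (Nat.pos_of_ne_zero hne)
      rw [YoungDiagram.mem_ofRowLens] at hmem
      obtain ⟨hlt, -⟩ := hmem
      simp at hlt
      omega
    intro k
    match k with
    | 0 => simpa using (greene_zero i j).symm
    | 1 => simpa [r0] using hL
    | (k + 2) =>
      have hsum : ∑ l ∈ Finset.range (k + 2),
          (YoungDiagram.ofRowLens [L, M - L] hsorted).rowLen l = M := by
        rw [Finset.range_eq_Ico, ← Finset.sum_Ico_consecutive _ (by omega : 0 ≤ 2) (by omega : 2 ≤ k + 2)]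
        have h2 : ∑ l ∈ Finset.Ico 2 (k + 2),
            (YoungDiagram.ofRowLens [L, M - L] hsorted).rowLen l = 0 :=
          Finset.sum_eq_zero (fun l hl => rhi l (Finset.mem_Ico.1 hl).1)
        rw [h2, ← Finset.range_eq_Ico]
        simp [Finset.sum_range_succ, r0, r1]
        omega
      rw [hsum]
      exact le_antisymm (greene_two hst htr (by omega)) (greene_le_wtotal i j (k + 2))
  · simpa using YoungDiagram.rowLen_ofRowLens (w := [L, M - L]) (hw := hsorted) ⟨0, by simp⟩

lemma path_lemma (n : ℕ) (a b : ℕ → ℕ)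
    (ha0 : a 0 = 0) (hb0 : b 0 = 0)
    (hamono : ∀ m, a m ≤ a (m + 1)) (hastep : ∀ m, a (m + 1) ≤ a m + 1)
    (hbmono : ∀ m, b m ≤ b (m + 1)) (hbstep : ∀ m, b (m + 1) ≤ b m + 1)
    (hballot : ∀ m, m ≤ n → m ≤ 2 * a m)
    (hend : a n = b n)
    (H : ∀ i t j, i ≤ t → t ≤ j → j ≤ n → i < j →
      ∃ s, i ≤ s ∧ s ≤ j ∧ t + b i + b j + 2 * a s ≤ s + a i + a j + 2 * b t) :
    ∀ m, m ≤ n → a m = b m := by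
  have hba : ∀ m, m ≤ n → b m ≤ a m := by
    intro m hm
    rcases Nat.eq_zero_or_pos m with rfl | hpos
    · omega
    · obtain ⟨s, hs1, hs2, hs3⟩ := H 0 0 m (le_refl 0) (by omega) hm hpos
      have := hballot s (by omega)
      omega
  intro m
  induction m with
  | zero => intro _; omega
  | succ m ih =>
    intro hm1
    have hab : a m = b m := ih (by omega)
    by_contra hne
    have hblt : b (m + 1) < a (m + 1) := lt_of_le_of_ne (hba (m + 1) hm1) (fun e => hne e.symm)
    have hbm : b (m + 1) = b m := by have := hbmono m; have := hastep m; omega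
    have ham : a (m + 1) = a m + 1 := by have := hbmono m; have := hastep m; have := hamono m; omega
    have hex : ∃ t, m + 1 ≤ t ∧ t ≤ n ∧ a t ≤ b t := ⟨n, by omega, le_refl n, le_of_eq hend⟩
    classical
    have hexj : ∃ j, (m + 1 ≤ j ∧ j ≤ n ∧ a j ≤ b j) ∧
        ∀ t, m + 1 ≤ t → t < j → b t < a t := by
      refine ⟨Nat.find hex, Nat.find_spec hex, ?_⟩
      intro t h1 h2
      have h3 := Nat.find_min hex h2
      push_neg at h3
      rcases Nat.lt_or_ge n t with hnt | hnt
      · have := Nat.find_spec hex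
        omega
      · have := h3 h1 hnt
        omega
    obtain ⟨j, ⟨hjm, hjn, hjab⟩, hmin⟩ := hexj
    have hjm1 : m + 1 < j := by
      rcases Nat.lt_or_ge (m + 1) j with hlt | hge
      · exact hlt
      · exfalso
        have hje : j = m + 1 := by omega
        rw [hje] at hjab; omega
    have hj1 : b (j - 1) < a (j - 1) := hmin (j - 1) (by omega) (by omega)
    have hjeq : a j = b j ∧ b j = b (j - 1) + 1 ∧ a j = a (j - 1) := by
      have e1 : j - 1 + 1 = j := by omega
      have := hbstep (j - 1); have := hbmono (j - 1)
      have := hastep (j - 1); have := hamono (j - 1)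
      rw [e1] at *
      omega
    set Da : ℕ → ℤ := fun s => 2 * (a s : ℤ) - s with hDa
    set Db : ℕ → ℤ := fun s => 2 * (b s : ℤ) - s with hDb
    have key1 : Db (m + 1) = Da m - 1 := by
      simp only [hDa, hDb]
      push_cast [hbm, hab]
      ring
    have key2 : Db (j - 1) = Da j - 1 := by
      simp only [hDa, hDb]
      have e1 : (b (j-1) : ℤ) = (b j : ℤ) - 1 := by
        have := hjeq.2.1; push_cast [this]; ring
      have e2 : ((j - 1 : ℕ) : ℤ) = (j : ℤ) - 1 := by omega
      rw [e1, e2, hjeq.1]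
      ring
    have key3 : ∀ s, m + 1 ≤ s → s ≤ j - 1 → Db s ≤ Da s - 2 := by
      intro s h1 h2
      have := hmin s h1 (by omega)
      simp only [hDa, hDb]
      omega
    obtain ⟨s', hs'mem, hs'min⟩ := Finset.exists_min_image (Finset.Icc m j) Da (by
      refine ⟨m, ?_⟩; simp; omega)
    simp only [Finset.mem_Icc] at hs'mem
    have hs'min' : ∀ s, m ≤ s → s ≤ j → Da s' ≤ Da s := by
      intro s h1 h2
      exact hs'min s (Finset.mem_Icc.2 ⟨h1, h2⟩)
    have hchoice : ∃ t, m ≤ t ∧ t ≤ j ∧ Db t ≤ Da s' - 1 := by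
      rcases eq_or_ne s' m with heq | hsm
      · exact ⟨m + 1, by omega, by omega, by rw [key1, heq]⟩
      rcases eq_or_ne s' j with heq | hsj
      · exact ⟨j - 1, by omega, by omega, by rw [key2, heq]⟩
      · exact ⟨s', by omega, by omega, by
          have := key3 s' (by omega) (by omega); omega⟩
    obtain ⟨t, htm, htj, htD⟩ := hchoice
    obtain ⟨s, hsm, hsj, hss⟩ := H m t j htm htj hjn (by omega)
    have hai : a m = b m := hab
    have haj : a j = b j := hjeq.1
    have hDD : Da s ≤ Db t := by
      simp only [hDa, hDb]
      omega
    have := hs'min' s hsm hsj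
    omega

lemma cnt_jump (hst : IsStandardTableau Y h) {c : ℕ × ℕ} (hc : c ∈ Y.cells) (r : ℕ) :
    cnt Y h r (h c) = cnt Y h r (h c - 1) + (if c.1 = r then 1 else 0) := by
  have hv1 : 1 ≤ h c := (val_mem hst hc).1
  have hunion : Y.cells.filter (fun e => e.1 = r ∧ h e ≤ h c) =
      (Y.cells.filter fun e => e.1 = r ∧ h e ≤ h c - 1) ∪
        (Y.cells.filter fun e => e.1 = r ∧ h e = h c) := by
    ext e
    simp only [Finset.mem_filter, Finset.mem_union]
    constructor
    · rintro ⟨heY, her, hev⟩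
      rcases Nat.lt_or_ge (h e) (h c) with hlt | hge
      · exact Or.inl ⟨heY, her, by omega⟩
      · exact Or.inr ⟨heY, her, by omega⟩
    · rintro (⟨heY, her, hev⟩ | ⟨heY, her, hev⟩) <;> exact ⟨heY, her, by omega⟩
  have hsecond : Y.cells.filter (fun e => e.1 = r ∧ h e = h c) =
      if c.1 = r then {c} else ∅ := by
    split_ifs with hr
    · ext e
      simp only [Finset.mem_filter, Finset.mem_singleton]
      constructor
      · rintro ⟨heY, her, hev⟩
        exact val_inj hst heY hc hev
      · rintro rfl
        exact ⟨hc, hr, rfl⟩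
    · rw [Finset.filter_eq_empty_iff]
      rintro e heY ⟨her, hev⟩
      exact hr (by rw [← val_inj hst heY hc hev]; exact her)
  rw [cnt, cnt, hunion, Finset.card_union_of_disjoint, hsecond]
  · congr 1
    split_ifs <;> simp
  · rw [Finset.disjoint_left]
    rintro e he he'
    simp only [Finset.mem_filter] at he he'
    omega

lemma cnt_col (hst : IsStandardTableau Y h) {c : ℕ × ℕ} (hc : c ∈ Y.cells) :
    cnt Y h c.1 (h c) = c.2 + 1 := by
  have himg : Y.cells.filter (fun e => e.1 = c.1 ∧ h e ≤ h c) =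
      (Finset.range (c.2 + 1)).image (fun j => (c.1, j)) := by
    ext e
    simp only [Finset.mem_filter, Finset.mem_image, Finset.mem_range]
    constructor
    · rintro ⟨heY, her, hev⟩
      refine ⟨e.2, ?_, ?_⟩
      · by_contra hgt
        have : c.2 < e.2 := by omega
        have := row_lt hst hc heY her.symm this
        omega
      · exact Prod.ext her.symm rfl
    · rintro ⟨j, hj, rfl⟩
      have hmem : ((c.1, j) : ℕ × ℕ) ∈ Y.cells := by
        rw [YoungDiagram.mem_cells] at hc ⊢
        exact Y.up_left_mem le_rfl (by omega : j ≤ c.2) (by simpa using hc)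
      refine ⟨hmem, rfl, ?_⟩
      rcases eq_or_lt_of_le (by omega : j ≤ c.2) with heq | hlt
      · have : ((c.1, j) : ℕ × ℕ) = c := Prod.ext rfl heq
        rw [this]
      · exact le_of_lt (row_lt hst hmem hc rfl hlt)
  rw [cnt, himg, Finset.card_image_of_injective _ (fun x y hxy => by
    simpa using congrArg Prod.snd hxy), Finset.card_range]

end Stmt19Aux

open Stmt19Aux in
/-- two distinct standard tableaux of a common two-row shape are
distinguished by some rectified shape `Y^·_{j/i}`; precisely, if `T = (Y, f)` and
`S = (Y, g)` are two-row standard tableaux and `Y^S_{j/i} ⪯ Y^T_{j/i}` (dominance,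
via partial row sums) for all `0 ≤ i < j ≤ n`, then `T = S`. -/
theorem stmt_19 (Y : YoungDiagram) (htr : ∀ c ∈ Y.cells, c.1 ≤ 1)
    (f g : ℕ × ℕ → ℕ) (hf : IsStandardTableau Y f) (hg : IsStandardTableau Y g)
    (hdom : ∀ i j : ℕ, i < j → j ≤ Y.card →
      ∀ Zf Zg : YoungDiagram, IsRectifiedShape Y f i j Zf → IsRectifiedShape Y g i j Zg →
        ∀ p : ℕ, ∑ l ∈ Finset.range p, Zg.rowLen l ≤ ∑ l ∈ Finset.range p, Zf.rowLen l) :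
    ∀ c ∈ Y.cells, g c = f c := by
  classical
  have hcnt_top : ∀ (h : ℕ × ℕ → ℕ), IsStandardTableau Y h →
      cnt Y h 0 Y.card = (Y.cells.filter fun c => c.1 = 0).card := by
    intro h hst
    rw [cnt]
    congr 1
    ext c
    simp only [Finset.mem_filter, and_congr_right_iff]
    intro hc
    have := (val_mem hst hc).2
    constructor
    · rintro ⟨h0, -⟩; exact h0
    · intro h0; exact ⟨h0, this⟩
  have hend : cnt Y f 0 Y.card = cnt Y g 0 Y.card := by
    rw [hcnt_top f hf, hcnt_top g hg]
  -- the key inequality system from the dominance hypothesis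
  have H : ∀ i t j, i ≤ t → t ≤ j → j ≤ Y.card → i < j →
      ∃ s, i ≤ s ∧ s ≤ j ∧ t + cnt Y g 0 i + cnt Y g 0 j + 2 * cnt Y f 0 s ≤
        s + cnt Y f 0 i + cnt Y f 0 j + 2 * cnt Y g 0 t := by
    intro i t j hit htj hjn hij
    obtain ⟨Zf, hZf, -⟩ := exists_rect hf htr (le_of_lt hij)
    obtain ⟨Zg, hZg, -⟩ := exists_rect hg htr (le_of_lt hij)
    have hd := hdom i j hij hjn Zf Zg hZf hZg 1
    rw [hZg 1, hZf 1] at hd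
    obtain ⟨s, hs1, hs2, hupper⟩ := greene_upper hf htr (le_of_lt hij)
    have hlow := greene_lower hg hit htj
    have hchain : wcnt Y g 1 i t + wcnt Y g 0 t j ≤ wcnt Y f 1 i s + wcnt Y f 0 s j :=
      le_trans hlow (le_trans hd hupper)
    have e1 := wcnt_add_cnt (Y := Y) (h := g) (r := 1) hit
    have e2 := wcnt_add_cnt (Y := Y) (h := g) (r := 0) htj
    have e3 := wcnt_add_cnt (Y := Y) (h := f) (r := 1) hs1
    have e4 := wcnt_add_cnt (Y := Y) (h := f) (r := 0) hs2
    have tf1 := cnt_total hf htr (show i ≤ Y.card by omega)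
    have tf2 := cnt_total hf htr (show t ≤ Y.card by omega)
    have tf3 := cnt_total hf htr (show j ≤ Y.card by omega)
    have tf4 := cnt_total hf htr (show s ≤ Y.card by omega)
    have tg1 := cnt_total hg htr (show i ≤ Y.card by omega)
    have tg2 := cnt_total hg htr (show t ≤ Y.card by omega)
    have tg3 := cnt_total hg htr (show j ≤ Y.card by omega)
    have tg4 := cnt_total hg htr (show s ≤ Y.card by omega)
    exact ⟨s, hs1, hs2, by omega⟩
  have hAeq : ∀ m, m ≤ Y.card → cnt Y f 0 m = cnt Y g 0 m :=
    path_lemma Y.card (cnt Y f 0) (cnt Y g 0) (cnt_zero hf 0) (cnt_zero hg 0)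
      (fun m => cnt_mono 0 m) (fun m => cnt_step hf 0 m)
      (fun m => cnt_mono 0 m) (fun m => cnt_step hg 0 m)
      (fun m hm => cnt_ballot hf htr hm) hend H
  -- conclude that each value occupies the same cell
  intro c hc
  have hv := val_mem hf hc
  obtain ⟨d, hdY', hdv⟩ := hf.1.surjOn (hg.1.mapsTo hc)
  -- d is the f-cell of the value g c
  have hdY : d ∈ Y.cells := by simpa using hdY'
  -- show c = d
  have hvc := val_mem hg hc
  have jf := cnt_jump hf hdY 0
  have jg := cnt_jump hg hc 0
  rw [hdv] at jf
  have hA1 := hAeq (g c) hvc.2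
  have hA2 := hAeq (g c - 1) (by omega)
  have hrow : d.1 = c.1 := by
    have h1 := htr d hdY
    have h2 := htr c hc
    split_ifs at jf jg <;> omega
  have cf := cnt_col hf hdY
  rw [hdv, hrow] at cf
  have cg := cnt_col hg hc
  have hcnt_eq : cnt Y f c.1 (g c) = cnt Y g c.1 (g c) := by
    have h2 := htr c hc
    interval_cases hr : c.1
    · exact hA1
    · have t1 := cnt_total hf htr hvc.2
      have t2 := cnt_total hg htr hvc.2
      omega
  have hcol : d.2 = c.2 := by omega
  have : d = c := Prod.ext hrow hcol
  rw [← hdv, this]
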